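/- arXiv:1808.06669 — 2 statements merged into one kernel-verified Lean document; each statement's English description precedes it below -/
import Mathlib

section
/- Suppose L is a hermitian monic pencil with coefficients A₁,…,A_g ∈ Matrix (Fin d) (Fin d) ℂ and there exist matrices D, P₀, C₁,…,C_m with P₀ positive semidefinite such that the affine linear matrix-valued identity Re(D·L̃) = P₀ + ∑ₖ Cₖᴴ L Cₖ holds as polynomials, where L̃ is an affine linear pencil, and ker P₀ ∩ ⋂ₖ ker Cₖ = {0}. Then for every g-tuple X of n×n matrices with L(X) positive definite, the matrix L̃(X) has trivial kernel (full column rank). -/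
open Matrix Kronecker ComplexOrder

section helpers

variable {l m' n' p' : Type*}

private lemma kron_conjT {l m n p : Type*} (A : Matrix l m ℂ) (B : Matrix n p ℂ) :
    (A ⊗ₖ B)ᴴ = Aᴴ ⊗ₖ Bᴴ := by
  ext ⟨i, s⟩ ⟨j, t⟩
  simp [Matrix.conjTranspose_apply, Matrix.kroneckerMap_apply]

private lemma sum_kron {ι l m n p : Type*} (s : Finset ι) (A : ι → Matrix l m ℂ)
    (B : Matrix n p ℂ) : (∑ i ∈ s, A i) ⊗ₖ B = ∑ i ∈ s, A i ⊗ₖ B := by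
  ext ⟨i, a⟩ ⟨j, b⟩
  simp [Matrix.kroneckerMap_apply, Matrix.sum_apply, Finset.sum_mul]

private lemma neg_kron {l m n p : Type*} (A : Matrix l m ℂ) (B : Matrix n p ℂ) :
    (-A) ⊗ₖ B = -(A ⊗ₖ B) := by
  ext ⟨i, a⟩ ⟨j, b⟩
  simp [Matrix.kroneckerMap_apply]

private lemma sum_mulVec' {ι m n : Type*} [Fintype n] (s : Finset ι)
    (A : ι → Matrix m n ℂ) (v : n → ℂ) :
    (∑ i ∈ s, A i) *ᵥ v = ∑ i ∈ s, A i *ᵥ v := by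
  ext j
  simp [Matrix.mulVec, dotProduct, Matrix.sum_apply, Finset.sum_mul, Finset.sum_apply]
  rw [Finset.sum_comm]

private lemma dotProduct_sum' {ι n : Type*} [Fintype n] (s : Finset ι) (v : n → ℂ)
    (w : ι → n → ℂ) : v ⬝ᵥ (∑ i ∈ s, w i) = ∑ i ∈ s, v ⬝ᵥ w i := by
  simp [dotProduct, Finset.mul_sum, Finset.sum_apply]
  rw [Finset.sum_comm]

private lemma kron_one_mulVec {a b n : ℕ} (M : Matrix (Fin a) (Fin b) ℂ)
    (v : Fin b × Fin n → ℂ) (i : Fin a) (t : Fin n) :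
    ((M ⊗ₖ (1 : Matrix (Fin n) (Fin n) ℂ)) *ᵥ v) (i, t)
      = (M *ᵥ fun j => v (j, t)) i := by
  simp [Matrix.mulVec, dotProduct, Fintype.sum_prod_type, Matrix.kroneckerMap_apply,
    Matrix.one_apply, mul_ite, ite_mul, mul_one, mul_zero, zero_mul, mul_assoc]

end helpers

theorem stmt_6 (d δ ε g : ℕ) (hδε : ε ≤ δ)
    -- coefficients of the hermitian monic pencil L of size d
    (A : Fin g → Matrix (Fin d) (Fin d) ℂ)
    -- coefficients of the δ×ε affine linear pencil L̃ = C̃ + ∑ⱼ Ãⱼ xⱼ + ∑ⱼ B̃ⱼ xⱼᴴ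
    (Ct : Matrix (Fin δ) (Fin ε) ℂ)
    (At Bt : Fin g → Matrix (Fin δ) (Fin ε) ℂ)
    -- the data of the certificate
    (m : ℕ) (D : Matrix (Fin ε) (Fin δ) ℂ) (P₀ : Matrix (Fin ε) (Fin ε) ℂ)
    (C : Fin m → Matrix (Fin d) (Fin ε) ℂ)
    (hP₀ : P₀.PosSemidef)
    -- the identity Re(D·L̃) = P₀ + ∑ₖ Cₖᴴ L Cₖ, as an equality of matrix coefficients:
    -- the constant coefficient
    (hconst : (2 : ℂ)⁻¹ • (D * Ct + (D * Ct)ᴴ) = P₀ + ∑ k, (C k)ᴴ * (C k))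
    -- the coefficient of xⱼ
    (hx : ∀ j, (2 : ℂ)⁻¹ • (D * At j + (Bt j)ᴴ * Dᴴ) = -∑ k, (C k)ᴴ * A j * (C k))
    -- the coefficient of xⱼᴴ
    (hxs : ∀ j, (2 : ℂ)⁻¹ • (D * Bt j + (At j)ᴴ * Dᴴ) = -∑ k, (C k)ᴴ * (A j)ᴴ * (C k))
    -- the kernel condition ker P₀ ∩ ⋂ₖ ker Cₖ = {0}
    (hker : ∀ x : Fin ε → ℂ, P₀.mulVec x = 0 → (∀ k, (C k).mulVec x = 0) → x = 0) :
    -- conclusion: for every X with L(X) ≻ 0, L̃(X) has trivial kernel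
    ∀ (n : ℕ) (X : Fin g → Matrix (Fin n) (Fin n) ℂ),
      ((1 : Matrix (Fin d × Fin n) (Fin d × Fin n) ℂ)
        - ∑ j, A j ⊗ₖ X j - ∑ j, (A j)ᴴ ⊗ₖ (X j)ᴴ).PosDef →
      ∀ v : Fin ε × Fin n → ℂ,
        (Ct ⊗ₖ (1 : Matrix (Fin n) (Fin n) ℂ)
          + ∑ j, At j ⊗ₖ X j + ∑ j, Bt j ⊗ₖ (X j)ᴴ).mulVec v = 0 → v = 0 := by
  intro n X hL v hv
  classical
  set LX : Matrix (Fin d × Fin n) (Fin d × Fin n) ℂ :=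
    (1 : Matrix (Fin d × Fin n) (Fin d × Fin n) ℂ)
      - ∑ j, A j ⊗ₖ X j - ∑ j, (A j)ᴴ ⊗ₖ (X j)ᴴ with hLXdef
  set E : Matrix (Fin ε × Fin n) (Fin ε × Fin n) ℂ :=
    (D * Ct) ⊗ₖ (1 : Matrix (Fin n) (Fin n) ℂ)
      + ∑ j, (D * At j) ⊗ₖ X j + ∑ j, (D * Bt j) ⊗ₖ (X j)ᴴ with hEdef
  have hE : E = (D ⊗ₖ (1 : Matrix (Fin n) (Fin n) ℂ)) *
      (Ct ⊗ₖ (1 : Matrix (Fin n) (Fin n) ℂ) + ∑ j, At j ⊗ₖ X j + ∑ j, Bt j ⊗ₖ (X j)ᴴ) := by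
    rw [hEdef]
    simp only [Matrix.mul_add, Matrix.mul_sum, ← Matrix.mul_kronecker_mul, one_mul, mul_one]
  have hEH : Eᴴ = (Ctᴴ * Dᴴ) ⊗ₖ (1 : Matrix (Fin n) (Fin n) ℂ)
      + ∑ j, ((At j)ᴴ * Dᴴ) ⊗ₖ (X j)ᴴ + ∑ j, ((Bt j)ᴴ * Dᴴ) ⊗ₖ X j := by
    rw [hEdef]
    simp only [Matrix.conjTranspose_add, Matrix.conjTranspose_sum, kron_conjT,
      Matrix.conjTranspose_mul, Matrix.conjTranspose_one, Matrix.conjTranspose_conjTranspose]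
  have hRk : ∀ k, ((C k) ⊗ₖ (1 : Matrix (Fin n) (Fin n) ℂ))ᴴ * LX * ((C k) ⊗ₖ (1 : Matrix (Fin n) (Fin n) ℂ))
      = ((C k)ᴴ * C k) ⊗ₖ (1 : Matrix (Fin n) (Fin n) ℂ)
        - ∑ j, ((C k)ᴴ * A j * C k) ⊗ₖ X j
        - ∑ j, ((C k)ᴴ * (A j)ᴴ * C k) ⊗ₖ (X j)ᴴ := by
    intro k
    rw [hLXdef]
    simp only [kron_conjT, Matrix.conjTranspose_one, Matrix.mul_sub, Matrix.sub_mul,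
      Matrix.mul_sum, Matrix.sum_mul, Matrix.mul_one, ← Matrix.mul_kronecker_mul,
      one_mul, mul_one, sub_mul, Finset.sum_mul]
  have hkey : (2 : ℂ)⁻¹ • (E + Eᴴ)
      = P₀ ⊗ₖ (1 : Matrix (Fin n) (Fin n) ℂ)
        + ∑ k, ((C k) ⊗ₖ (1 : Matrix (Fin n) (Fin n) ℂ))ᴴ * LX * ((C k) ⊗ₖ (1 : Matrix (Fin n) (Fin n) ℂ)) := by
    calc (2 : ℂ)⁻¹ • (E + Eᴴ)
        = ((2 : ℂ)⁻¹ • (D * Ct + (D * Ct)ᴴ)) ⊗ₖ (1 : Matrix (Fin n) (Fin n) ℂ)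
          + ∑ j, ((2 : ℂ)⁻¹ • (D * At j + (Bt j)ᴴ * Dᴴ)) ⊗ₖ X j
          + ∑ j, ((2 : ℂ)⁻¹ • (D * Bt j + (At j)ᴴ * Dᴴ)) ⊗ₖ (X j)ᴴ := by
          rw [hEH, hEdef]
          simp only [Matrix.smul_kronecker, Matrix.add_kronecker, smul_add, Finset.smul_sum,
            Matrix.conjTranspose_mul, Finset.sum_add_distrib]
          abel
      _ = (P₀ + ∑ k, (C k)ᴴ * C k) ⊗ₖ (1 : Matrix (Fin n) (Fin n) ℂ)
          + ∑ j, (-∑ k, (C k)ᴴ * A j * C k) ⊗ₖ X j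
          + ∑ j, (-∑ k, (C k)ᴴ * (A j)ᴴ * C k) ⊗ₖ (X j)ᴴ := by
          rw [hconst]
          simp only [hx, hxs]
      _ = P₀ ⊗ₖ (1 : Matrix (Fin n) (Fin n) ℂ)
          + ∑ k, ((C k) ⊗ₖ (1 : Matrix (Fin n) (Fin n) ℂ))ᴴ * LX * ((C k) ⊗ₖ (1 : Matrix (Fin n) (Fin n) ℂ)) := by
          simp only [hRk, Matrix.add_kronecker, sum_kron, neg_kron, Finset.sum_sub_distrib,
            Finset.sum_neg_distrib]
          rw [Finset.sum_comm (s := Finset.univ) (t := Finset.univ)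
            (f := fun j k => ((C k)ᴴ * A j * C k) ⊗ₖ X j),
            Finset.sum_comm (s := Finset.univ) (t := Finset.univ)
            (f := fun j k => ((C k)ᴴ * (A j)ᴴ * C k) ⊗ₖ (X j)ᴴ)]
          abel
  -- the quadratic form of E at v vanishes
  have hEv : E *ᵥ v = 0 := by
    rw [hE, ← Matrix.mulVec_mulVec, hv, Matrix.mulVec_zero]
  have h0 : star v ⬝ᵥ (((2 : ℂ)⁻¹ • (E + Eᴴ)) *ᵥ v) = 0 := by
    have h2 : star v ⬝ᵥ (Eᴴ *ᵥ v) = 0 := by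
      rw [Matrix.dotProduct_mulVec, ← Matrix.star_mulVec, hEv]
      simp
    rw [Matrix.smul_mulVec, dotProduct_smul, Matrix.add_mulVec,
      dotProduct_add, hEv, dotProduct_zero, zero_add, h2, smul_zero]
  rw [hkey, Matrix.add_mulVec, dotProduct_add, sum_mulVec', dotProduct_sum'] at h0
  -- positivity of the summands
  have hPsdP : (P₀ ⊗ₖ (1 : Matrix (Fin n) (Fin n) ℂ)).PosSemidef := by
    exact hP₀.kronecker Matrix.PosSemidef.one
  have hPsdQ : ∀ k, (((C k) ⊗ₖ (1 : Matrix (Fin n) (Fin n) ℂ))ᴴ * LX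
      * ((C k) ⊗ₖ (1 : Matrix (Fin n) (Fin n) ℂ))).PosSemidef := fun k =>
    hL.posSemidef.conjTranspose_mul_mul_same _
  have ht0 : (0 : ℂ) ≤ star v ⬝ᵥ ((P₀ ⊗ₖ (1 : Matrix (Fin n) (Fin n) ℂ)) *ᵥ v) := hPsdP.dotProduct_mulVec_nonneg v
  have hts : (0 : ℂ) ≤ ∑ k, star v ⬝ᵥ ((((C k) ⊗ₖ (1 : Matrix (Fin n) (Fin n) ℂ))ᴴ * LX
      * ((C k) ⊗ₖ (1 : Matrix (Fin n) (Fin n) ℂ))) *ᵥ v) := Finset.sum_nonneg fun k _ => (hPsdQ k).dotProduct_mulVec_nonneg v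
  have ht0z : star v ⬝ᵥ ((P₀ ⊗ₖ (1 : Matrix (Fin n) (Fin n) ℂ)) *ᵥ v) = 0 := by
    have h1 : star v ⬝ᵥ ((P₀ ⊗ₖ (1 : Matrix (Fin n) (Fin n) ℂ)) *ᵥ v)
        = -∑ k, star v ⬝ᵥ ((((C k) ⊗ₖ (1 : Matrix (Fin n) (Fin n) ℂ))ᴴ * LX
          * ((C k) ⊗ₖ (1 : Matrix (Fin n) (Fin n) ℂ))) *ᵥ v) := by linear_combination h0
    exact le_antisymm (h1 ▸ neg_nonpos.mpr hts) ht0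
  have htsz : ∀ k, star v ⬝ᵥ ((((C k) ⊗ₖ (1 : Matrix (Fin n) (Fin n) ℂ))ᴴ * LX
      * ((C k) ⊗ₖ (1 : Matrix (Fin n) (Fin n) ℂ))) *ᵥ v) = 0 := by
    have hS : ∑ k, star v ⬝ᵥ ((((C k) ⊗ₖ (1 : Matrix (Fin n) (Fin n) ℂ))ᴴ * LX
        * ((C k) ⊗ₖ (1 : Matrix (Fin n) (Fin n) ℂ))) *ᵥ v) = 0 := by linear_combination h0 - ht0z
    intro k
    exact (Finset.sum_eq_zero_iff_of_nonneg fun k _ => (hPsdQ k).dotProduct_mulVec_nonneg v).mp hS k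
      (Finset.mem_univ k)
  -- P₀ ⊗ 1 kills v
  have hPv : (P₀ ⊗ₖ (1 : Matrix (Fin n) (Fin n) ℂ)) *ᵥ v = 0 :=
    (hPsdP.dotProduct_mulVec_zero_iff v).mp ht0z
  -- each Cₖ ⊗ 1 kills v
  have hCv : ∀ k, ((C k) ⊗ₖ (1 : Matrix (Fin n) (Fin n) ℂ)) *ᵥ v = 0 := by
    intro k
    by_contra hw
    have htk := htsz k
    rw [← Matrix.mulVec_mulVec, ← Matrix.mulVec_mulVec, Matrix.dotProduct_mulVec,
      ← Matrix.star_mulVec] at htk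
    exact (hL.dotProduct_mulVec_pos hw).ne' htk
  -- conclude columnwise
  have hcol : ∀ t : Fin n, (fun i => v (i, t)) = 0 := by
    intro t
    apply hker
    · funext i
      have h := congrFun hPv (i, t)
      rw [kron_one_mulVec] at h
      simpa using h
    · intro k
      funext i
      have h := congrFun (hCv k) (i, t)
      rw [kron_one_mulVec] at h
      simpa using h
  funext p
  obtain ⟨i, t⟩ := p
  exact congrFun (hcol t) i
end

section
/- Let q be a noncommutative polynomial in the analytic variables x₁,…,x_g only (an element of the free algebra on x), and suppose q + q* is written as α + ℓ − ∑ₖ ℓₖ* ℓₖ where α ∈ ℂ, ℓ and each ℓₖ are homogeneous-degree-≤-1 elements of the free *-algebra ℂ⟨x, x*⟩. If q + q* contains no mixed words (no word containing both a starred and an unstarred letter), then all ℓₖ with nonzero degree-one part in both x and x* components must vanish; in particular, if every ℓₖ = cₖ + ∑ⱼ aₖⱼ xⱼ + ∑ⱼ bₖⱼ xⱼ* and the expression equals q + q*, then for each k and each j, aₖⱼ · conj(aₖⱼ) terms produce the coefficient of xⱼ* xⱼ, forcing ∑ₖ |aₖⱼ|² = 0 and ∑ₖ |bₖⱼ|²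 = 0, hence each ℓₖ is constant. -/
open scoped ComplexConjugate

noncomputable section

/-- The analytic generator `xⱼ` in the free *-algebra `ℂ⟨x, x*⟩`,
modeled as `FreeAlgebra ℂ (Fin g ⊕ Fin g)`. -/
def xA (g : ℕ) (j : Fin g) : FreeAlgebra ℂ (Fin g ⊕ Fin g) :=
  FreeAlgebra.ι ℂ (Sum.inl j)

/-- The anti-analytic generator `xⱼ*`. -/
def xS (g : ℕ) (j : Fin g) : FreeAlgebra ℂ (Fin g ⊕ Fin g) :=
  FreeAlgebra.ι ℂ (Sum.inr j)

/-- The analytic word `x_{w₁} x_{w₂} ⋯ x_{w_n}` associated to a word `w` in the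
letters `x₁, …, x_g`. -/
def embWord (g : ℕ) (w : List (Fin g)) : FreeAlgebra ℂ (Fin g ⊕ Fin g) :=
  (w.map fun j => xA g j).prod

/-- The adjoint `x_{w_n}* ⋯ x_{w₁}*` of the analytic word associated to `w`. -/
def embWordStar (g : ℕ) (w : List (Fin g)) : FreeAlgebra ℂ (Fin g ⊕ Fin g) :=
  (w.reverse.map fun j => xS g j).prod

abbrev M3 := Matrix (Fin 3) (Fin 3) ℂ
def E01 : M3 := Matrix.single 0 1 1
def E12 : M3 := Matrix.single 1 2 1

lemma prod02_E12 (L : List M3) (h : ∀ A ∈ L, A = E12 ∨ A = 0) : L.prod 0 2 = 0 := by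
  cases L with
  | nil => simp [Matrix.one_apply]
  | cons A T =>
    have hA := h A (by simp)
    rw [List.prod_cons, Matrix.mul_apply]
    apply Finset.sum_eq_zero
    intro k _
    rcases hA with h1 | h1 <;> simp [h1, E12, Matrix.single]

lemma prod_E01 (L : List M3) (h : ∀ A ∈ L, A = E01 ∨ A = 0) :
    L.prod 0 2 = 0 ∧ L.prod 1 2 = 0 := by
  induction L with
  | nil => constructor <;> simp [Matrix.one_apply]
  | cons A T ih =>
    have hA := h A (by simp)
    have ihT := ih (fun B hB => h B (by simp [hB]))
    constructor <;> rw [List.prod_cons, Matrix.mul_apply]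
    · rcases hA with h1 | h1
      · simp [h1, E01, Matrix.single, Fin.sum_univ_three, ihT.2]
      · simp [h1]
    · apply Finset.sum_eq_zero; intro k _
      rcases hA with h1 | h1 <;> simp [h1, E01, Matrix.single]

theorem stmt_15 (g m : ℕ)
    -- the analytic polynomial q = ∑_w λ_w x^w and its adjoint q* = ∑_w conj(λ_w) (x^w)*
    (S : Finset (List (Fin g))) (lam : List (Fin g) → ℂ)
    -- the data of ℓ = ℓ₀ + ∑ⱼ eⱼ xⱼ + ∑ⱼ fⱼ xⱼ* and ℓₖ = cₖ + ∑ⱼ aₖⱼ xⱼ + ∑ⱼ bₖⱼ xⱼ*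
    (ℓ0 : ℂ) (e f : Fin g → ℂ) (c : Fin m → ℂ) (a b : Fin m → Fin g → ℂ) (α : ℂ)
    -- the identity q + q* = α + ℓ − ∑ₖ ℓₖ* ℓₖ in ℂ⟨x, x*⟩
    (hid :
      (∑ w ∈ S, lam w • embWord g w) + (∑ w ∈ S, conj (lam w) • embWordStar g w) =
      algebraMap ℂ (FreeAlgebra ℂ (Fin g ⊕ Fin g)) α
        + (algebraMap ℂ _ ℓ0 + ∑ j, e j • xA g j + ∑ j, f j • xS g j)
        - ∑ k, (algebraMap ℂ _ (conj (c k)) + ∑ j, conj (a k j) • xS g j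
                  + ∑ j, conj (b k j) • xA g j)
              * (algebraMap ℂ _ (c k) + ∑ j, a k j • xA g j + ∑ j, b k j • xS g j)) :
    ∀ (k : Fin m) (j : Fin g), a k j = 0 ∧ b k j = 0 := by
  intro k0 j
  -- the "a" homomorphism
  have key : ∑ k, conj (a k j) * a k j = 0 := by
    set φ := FreeAlgebra.lift ℂ (Sum.elim (fun j' => if j' = j then E12 else 0)
      (fun j' => if j' = j then E01 else 0)) with hφ
    have hW : ∀ w : List (Fin g), (φ (embWord g w)) 0 2 = 0 := by
      intro w
      rw [embWord, map_list_prod, List.map_map]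
      apply prod02_E12
      intro A hA
      simp only [List.mem_map, Function.comp] at hA
      obtain ⟨i, _, rfl⟩ := hA
      rcases eq_or_ne i j with h | h <;>
        simp [xA, hφ, FreeAlgebra.lift_ι_apply, h]
    have hWs : ∀ w : List (Fin g), (φ (embWordStar g w)) 0 2 = 0 := by
      intro w
      rw [embWordStar, map_list_prod, List.map_map]
      refine (prod_E01 _ ?_).1
      intro A hA
      simp only [List.mem_map, Function.comp] at hA
      obtain ⟨i, _, rfl⟩ := hA
      rcases eq_or_ne i j with h | h <;>
        simp [xS, hφ, FreeAlgebra.lift_ι_apply, h]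
    have H := congrArg (fun z => (φ z) 0 2) hid
    simp only [map_add, map_sub, map_sum, map_smul, map_mul, AlgHom.commutes,
      Matrix.add_apply, Matrix.sub_apply, Matrix.smul_apply, Matrix.sum_apply,
      smul_eq_mul] at H
    simp only [hW, hWs, mul_zero, Finset.sum_const_zero, add_zero] at H
    clear hid hW hWs
    simp only [hφ, xA, xS, FreeAlgebra.lift_ι_apply, Sum.elim_inl, Sum.elim_inr,
      smul_ite, smul_zero, Finset.sum_ite_eq', Finset.mem_univ, if_true,
      apply_ite (fun A : M3 => A 0 2), Matrix.zero_apply, mul_zero,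
      Finset.sum_const_zero, add_zero, Matrix.mul_apply, Fin.sum_univ_three,
      Matrix.add_apply, Matrix.smul_apply, Matrix.algebraMap_matrix_apply,
      E01, E12, Matrix.single, Matrix.of_apply, smul_eq_mul] at H
    norm_num [Fin.ext_iff] at H
    exact H
  have keyb : ∑ k, conj (b k j) * b k j = 0 := by
    set φ := FreeAlgebra.lift ℂ (Sum.elim (fun j' => if j' = j then E01 else 0)
      (fun j' => if j' = j then E12 else 0)) with hφ
    have hW : ∀ w : List (Fin g), (φ (embWord g w)) 0 2 = 0 := by
      intro w
      rw [embWord, map_list_prod, List.map_map]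
      refine (prod_E01 _ ?_).1
      intro A hA
      simp only [List.mem_map, Function.comp] at hA
      obtain ⟨i, _, rfl⟩ := hA
      rcases eq_or_ne i j with h | h <;>
        simp [xA, hφ, FreeAlgebra.lift_ι_apply, h]
    have hWs : ∀ w : List (Fin g), (φ (embWordStar g w)) 0 2 = 0 := by
      intro w
      rw [embWordStar, map_list_prod, List.map_map]
      apply prod02_E12
      intro A hA
      simp only [List.mem_map, Function.comp] at hA
      obtain ⟨i, _, rfl⟩ := hA
      rcases eq_or_ne i j with h | h <;>
        simp [xS, hφ, FreeAlgebra.lift_ι_apply, h]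
    have H := congrArg (fun z => (φ z) 0 2) hid
    simp only [map_add, map_sub, map_sum, map_smul, map_mul, AlgHom.commutes,
      Matrix.add_apply, Matrix.sub_apply, Matrix.smul_apply, Matrix.sum_apply,
      smul_eq_mul] at H
    simp only [hW, hWs, mul_zero, Finset.sum_const_zero, add_zero] at H
    clear hid hW hWs
    simp only [hφ, xA, xS, FreeAlgebra.lift_ι_apply, Sum.elim_inl, Sum.elim_inr,
      smul_ite, smul_zero, Finset.sum_ite_eq', Finset.mem_univ, if_true,
      apply_ite (fun A : M3 => A 0 2), Matrix.zero_apply, mul_zero,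
      Finset.sum_const_zero, add_zero, Matrix.mul_apply, Fin.sum_univ_three,
      Matrix.add_apply, Matrix.smul_apply, Matrix.algebraMap_matrix_apply,
      E01, E12, Matrix.single, Matrix.of_apply, smul_eq_mul] at H
    norm_num [Fin.ext_iff] at H
    exact H
  constructor
  · have h2 : ((∑ k, Complex.normSq (a k j) : ℝ) : ℂ) = 0 := by
      push_cast [Complex.normSq_eq_conj_mul_self]; exact key
    have h3 := Complex.ofReal_eq_zero.mp h2
    have h4 := (Finset.sum_eq_zero_iff_of_nonneg
      (fun k _ => Complex.normSq_nonneg (a k j))).mp h3 k0 (Finset.mem_univ _)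
    exact Complex.normSq_eq_zero.mp h4
  · have h2 : ((∑ k, Complex.normSq (b k j) : ℝ) : ℂ) = 0 := by
      push_cast [Complex.normSq_eq_conj_mul_self]; exact keyb
    have h3 := Complex.ofReal_eq_zero.mp h2
    have h4 := (Finset.sum_eq_zero_iff_of_nonneg
      (fun k _ => Complex.normSq_nonneg (b k j))).mp h3 k0 (Finset.mem_univ _)
    exact Complex.normSq_eq_zero.mp h4

end
end
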